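/- arXiv:2205.05425 — 3 statements merged into one kernel-verified Lean document; each statement's English description precedes it below -/
import Mathlib

section
/- Uniform law of large numbers for ergodic sequences on a compact parameter set: Let (Ω, 𝒜, P) be a probability space, T : Ω → Ω a measure-preserving ergodic map, d ≥ 1, Θ ⊆ ℝ^d a nonempty compact set, and ρ : Θ × Ω → ℝ such that θ ↦ ρ(θ, ω) is continuous on Θ for every ω, ω ↦ ρ(θ, ω) is measurable for every θ, and E[sup_{θ∈Θ} |ρ(θ, ·)|] < ∞. Then the uniform deviation sup_{θ∈Θ} |(1/n) Σ_{t=0}^{n−1} ρ(θ, T^t ω) − E[ρ(θ, ·)]| converges to 0 for P-almost every ω (and hence in P-measure) as n → ∞. -/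
open MeasureTheory Filter Topology


section Maximal

variable {Ω : Type*} [MeasurableSpace Ω]

/-- Maximal ergodic theorem (special case): if almost every point has some positive
partial Birkhoff sum, then the integral of `g` is nonnegative. -/
theorem maximal_ergodic_aux (P : Measure Ω) [IsProbabilityMeasure P]
    {T : Ω → Ω} (hT : MeasurePreserving T P P) {g : Ω → ℝ}
    (hgm : Measurable g) (hgi : Integrable g P)
    (hfull : ∀ᵐ ω ∂P, ∃ n : ℕ, 0 < ∑ t ∈ Finset.range n, g (T^[t] ω)) :
    0 ≤ ∫ ω, g ω ∂P := by
  set S : ℕ → Ω → ℝ := fun n ω => ∑ t ∈ Finset.range n, g (T^[t] ω) with hS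
  have hSm : ∀ n, Measurable (S n) := fun n =>
    Finset.measurable_sum _ fun t _ => hgm.comp (hT.measurable.iterate t)
  have hSi : ∀ n, Integrable (S n) P := by
    intro n
    exact integrable_finset_sum _ fun t _ =>
      ((hT.iterate t).integrable_comp hgi.1).mpr hgi
  have hSrec : ∀ k ω, S (k + 1) ω = g ω + S k (T ω) := by
    intro k ω
    simp only [hS]
    rw [Finset.sum_range_succ']
    simp [Function.iterate_succ_apply, add_comm]
  -- the running maxima
  set Φ : ℕ → Ω → ℝ := fun n => Nat.rec (fun _ => (0 : ℝ))
    (fun n Φn ω => max (Φn ω) (S (n + 1) ω)) n with hΦ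
  have hΦ0 : ∀ ω, Φ 0 ω = 0 := fun _ => rfl
  have hΦsucc : ∀ n ω, Φ (n + 1) ω = max (Φ n ω) (S (n + 1) ω) := fun _ _ => rfl
  have hΦm : ∀ n, Measurable (Φ n) := by
    intro n; induction n with
    | zero => exact measurable_const
    | succ n ih => exact ih.max (hSm (n + 1))
  have hΦi : ∀ n, Integrable (Φ n) P := by
    intro n; induction n with
    | zero => exact integrable_const 0
    | succ n ih => exact ih.sup (hSi (n + 1))
  have hΦnonneg : ∀ n ω, 0 ≤ Φ n ω := by
    intro n; induction n with
    | zero => intro ω; simp [hΦ0]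
    | succ n ih => intro ω; exact le_trans (ih ω) (le_max_left _ _)
  have hΦmono : ∀ n ω, Φ n ω ≤ Φ (n + 1) ω := fun n ω => le_max_left _ _
  have hSleΦ : ∀ n k, k ≤ n → ∀ ω, S k ω ≤ Φ n ω := by
    intro n; induction n with
    | zero =>
      intro k hk ω; interval_cases k; simp [hS, hΦ0]
    | succ n ih =>
      intro k hk ω
      rcases Nat.lt_or_ge k (n + 1) with h | h
      · exact le_trans (ih k (Nat.lt_succ_iff.mp h) ω) (hΦmono n ω)
      · have : k = n + 1 := le_antisymm hk h
        subst this
        exact le_max_right _ _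
  have hattain : ∀ n ω, Φ n ω = 0 ∨ ∃ k, 1 ≤ k ∧ k ≤ n ∧ Φ n ω = S k ω := by
    intro n; induction n with
    | zero => intro ω; exact Or.inl (hΦ0 ω)
    | succ n ih =>
      intro ω
      rcases max_cases (Φ n ω) (S (n + 1) ω) with ⟨h1, _⟩ | ⟨h1, _⟩
      · rcases ih ω with h | ⟨k, hk1, hk2, hk3⟩
        · exact Or.inl (by rw [hΦsucc, h1, h])
        · exact Or.inr ⟨k, hk1, hk2.trans (Nat.le_succ n), by rw [hΦsucc, h1, hk3]⟩
      · exact Or.inr ⟨n + 1, Nat.succ_le_succ (Nat.zero_le n), le_refl _,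
          by rw [hΦsucc, h1]⟩
  set E : ℕ → Set Ω := fun n => {ω | 0 < Φ n ω} with hE
  have hEmeas : ∀ n, MeasurableSet (E n) := fun n =>
    measurableSet_lt measurable_const (hΦm n)
  -- the key pointwise inequality
  have hkey : ∀ n ω, Φ n ω - Φ n (T ω) ≤ (E n).indicator g ω := by
    intro n ω
    by_cases hω : ω ∈ E n
    · rw [Set.indicator_of_mem hω]
      rcases hattain n ω with h | ⟨k, hk1, hk2, hk3⟩
      · exfalso; exact absurd h (ne_of_gt hω)
      · obtain ⟨j, rfl⟩ := Nat.exists_eq_add_of_le hk1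
        have h1 : S (1 + j) ω = g ω + S j (T ω) := by
          rw [add_comm 1 j]; exact hSrec j ω
        have h2 : S j (T ω) ≤ Φ n (T ω) := hSleΦ n j (by omega) (T ω)
        rw [hk3, h1]; linarith
    · rw [Set.indicator_of_notMem hω]
      have h1 : Φ n ω ≤ 0 := not_lt.mp hω
      have h2 : 0 ≤ Φ n (T ω) := hΦnonneg n (T ω)
      linarith
  -- integral of Φ n - Φ n ∘ T is zero
  have hcomp : ∀ n, ∫ ω, Φ n (T ω) ∂P = ∫ ω, Φ n ω ∂P := by
    intro n
    calc ∫ ω, Φ n (T ω) ∂P = ∫ ω, Φ n ω ∂(Measure.map T P) :=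
          (integral_map hT.measurable.aemeasurable
            ((hΦm n).aestronglyMeasurable.mono_ac (hT.map_eq.le.absolutelyContinuous))).symm
      _ = ∫ ω, Φ n ω ∂P := by rw [hT.map_eq]
  have hΦTi : ∀ n, Integrable (fun ω => Φ n (T ω)) P := fun n =>
    (hT.integrable_comp (hΦm n).aestronglyMeasurable).mpr (hΦi n)
  have hnonneg : ∀ n, 0 ≤ ∫ ω in E n, g ω ∂P := by
    intro n
    have h0 : ∫ ω, (Φ n ω - Φ n (T ω)) ∂P = 0 := by
      rw [integral_sub (hΦi n) (hΦTi n), hcomp n, sub_self]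
    have hmono : ∫ ω, (Φ n ω - Φ n (T ω)) ∂P ≤ ∫ ω, (E n).indicator g ω ∂P :=
      integral_mono ((hΦi n).sub (hΦTi n)) (hgi.indicator (hEmeas n)) (hkey n)
    rw [h0, integral_indicator (hEmeas n)] at hmono
    exact hmono
  -- pass to the limit
  have hmonoE : Monotone E := by
    apply monotone_nat_of_le_succ
    intro n ω hω
    exact lt_of_lt_of_le hω (hΦmono n ω)
  have hU : (⋃ n, E n) = {ω | ∃ k, 0 < S k ω} := by
    ext ω
    simp only [Set.mem_iUnion, Set.mem_setOf_eq, hE]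
    constructor
    · rintro ⟨n, hn⟩
      rcases hattain n ω with h | ⟨k, _, _, hk3⟩
      · exact absurd h (ne_of_gt hn)
      · exact ⟨k, hk3 ▸ hn⟩
    · rintro ⟨k, hk⟩
      exact ⟨k, lt_of_lt_of_le hk (hSleΦ k k le_rfl ω)⟩
  have htend := tendsto_setIntegral_of_monotone hEmeas hmonoE hgi.integrableOn
  have hlim : 0 ≤ ∫ ω in (⋃ n, E n), g ω ∂P :=
    ge_of_tendsto' htend hnonneg
  have hfull' : (⋃ n, E n) =ᵐ[P] (Set.univ : Set Ω) := by
    rw [ae_eq_univ, hU, Set.compl_setOf]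
    exact ae_iff.mp hfull
  calc (0:ℝ) ≤ ∫ ω in (⋃ n, E n), g ω ∂P := hlim
    _ = ∫ ω in Set.univ, g ω ∂P := by rw [Measure.restrict_congr_set hfull']
    _ = ∫ ω, g ω ∂P := by rw [setIntegral_univ]

end Maximal

section S2
variable {Ω : Type*} [MeasurableSpace Ω]

private lemma bddAbove_range_succ_iff {u : ℕ → ℝ} :
    BddAbove (Set.range fun n => u (n + 1)) ↔ BddAbove (Set.range u) := by
  constructor
  · rintro ⟨b, hb⟩
    refine ⟨max b (u 0), ?_⟩
    rintro x ⟨n, rfl⟩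
    cases n with
    | zero => exact le_max_right _ _
    | succ m => exact le_trans (hb ⟨m, rfl⟩) (le_max_left _ _)
  · rintro ⟨b, hb⟩
    exact ⟨b, by rintro x ⟨n, rfl⟩; exact hb ⟨n + 1, rfl⟩⟩

private lemma bddAbove_range_sub_const_iff {u : ℕ → ℝ} {c : ℝ} :
    BddAbove (Set.range fun n => u n - c) ↔ BddAbove (Set.range u) := by
  constructor
  · rintro ⟨b, hb⟩
    exact ⟨b + c, by rintro x ⟨n, rfl⟩; have := hb ⟨n, rfl⟩; simp at this ⊢; linarith⟩
  · rintro ⟨b, hb⟩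
    exact ⟨b - c, by rintro x ⟨n, rfl⟩; have := hb ⟨n, rfl⟩; simp at this ⊢; linarith⟩

/-- Step A: upper bound for Birkhoff sums from ergodicity. -/
theorem birkhoff_upper (P : Measure Ω) [IsProbabilityMeasure P]
    {T : Ω → Ω} (hT : Ergodic T P) {f : Ω → ℝ}
    (hfm : Measurable f) (hfi : Integrable f P) {ε : ℝ} (hε : 0 < ε) :
    ∀ᵐ ω ∂P, ∃ M : ℝ, ∀ n : ℕ,
      ∑ t ∈ Finset.range n, f (T^[t] ω) ≤ n * ((∫ ω', f ω' ∂P) + ε) + M := by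
  set I : ℝ := ∫ ω', f ω' ∂P with hI
  set c : ℝ := I + ε with hc
  set g : Ω → ℝ := fun ω => f ω - c with hg
  have hgm : Measurable g := hfm.sub measurable_const
  have hgi : Integrable g P := hfi.sub (integrable_const c)
  have hgint : ∫ ω, g ω ∂P = -ε := by
    rw [hg]
    rw [integral_sub hfi (integrable_const c), integral_const]
    simp [hc]
    linarith [hI]
  set S : ℕ → Ω → ℝ := fun n ω => ∑ t ∈ Finset.range n, g (T^[t] ω) with hSdef
  have hSm : ∀ n, Measurable (S n) := fun n =>
    Finset.measurable_sum _ fun t _ =>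
      hgm.comp (hT.toMeasurePreserving.measurable.iterate t)
  have hSrec : ∀ k ω, S (k + 1) ω = g ω + S k (T ω) := by
    intro k ω
    simp only [hSdef]
    rw [Finset.sum_range_succ']
    simp [Function.iterate_succ_apply, add_comm]
  have hSf : ∀ n ω, S n ω = (∑ t ∈ Finset.range n, f (T^[t] ω)) - n * c := by
    intro n ω
    simp only [hSdef, hg, Finset.sum_sub_distrib, Finset.sum_const, Finset.card_range,
      nsmul_eq_mul]
  set A : Set Ω := {ω | ¬ BddAbove (Set.range fun n => S n ω)} with hA
  have hAmeas : MeasurableSet A := by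
    have : MeasurableSet {ω | BddAbove (Set.range fun n => S n ω)} :=
      measurableSet_bddAbove_range fun n => hSm n
    exact this.compl
  have hAinv : T ⁻¹' A = A := by
    ext ω
    simp only [hA, Set.mem_preimage, Set.mem_setOf_eq]
    have heq : (fun n => S n (T ω)) = fun n => S (n + 1) ω - g ω := by
      funext n
      have := hSrec n ω
      linarith
    rw [heq]
    rw [not_iff_not]
    exact (bddAbove_range_sub_const_iff (u := fun n => S (n + 1) ω)).trans
      (bddAbove_range_succ_iff (u := fun n => S n ω))
  rcases hT.toPreErgodic.ae_empty_or_univ hAmeas hAinv with hcase | hcase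
  · -- A is null: a.e. the Birkhoff sums of g are bounded above
    have hnull : P A = 0 := ae_eq_empty.mp hcase
    have hA' : {a : Ω | ¬ a ∉ A} = A := by ext a; simp [not_not]
    have : ∀ᵐ ω ∂P, ω ∉ A := by rw [ae_iff, hA']; exact hnull
    filter_upwards [this] with ω hω
    simp only [hA, Set.mem_setOf_eq, not_not] at hω
    obtain ⟨M, hM⟩ := hω
    refine ⟨M, fun n => ?_⟩
    have h1 : S n ω ≤ M := hM ⟨n, rfl⟩
    have h2 := hSf n ω
    linarith
  · -- A has full measure: contradiction with the maximal ergodic theorem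
    exfalso
    have hA' : {a : Ω | ¬ a ∈ A} = Aᶜ := rfl
    have : ∀ᵐ ω ∂P, ω ∈ A := by
      rw [ae_iff, hA']
      exact ae_eq_univ.mp hcase
    have hpos : ∀ᵐ ω ∂P, ∃ n : ℕ, 0 < ∑ t ∈ Finset.range n, g (T^[t] ω) := by
      filter_upwards [this] with ω hω
      simp only [hA, Set.mem_setOf_eq] at hω
      obtain ⟨y, hy, hy0⟩ := not_bddAbove_iff.mp hω 0
      obtain ⟨n, rfl⟩ := hy
      exact ⟨n, hy0⟩
    have := maximal_ergodic_aux P hT.toMeasurePreserving hgm hgi hpos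
    rw [hgint] at this
    linarith

private lemma tendsto_of_linear_bounds {u : ℕ → ℝ} {I : ℝ}
    (h : ∀ k : ℕ, ∃ M : ℝ, ∀ n : ℕ, |u n - n * I| ≤ n * (1 / (k + 1)) + M) :
    Tendsto (fun n : ℕ => (n : ℝ)⁻¹ * u n) atTop (𝓝 I) := by
  rw [Metric.tendsto_atTop]
  intro ε hε
  obtain ⟨k, hk⟩ := exists_nat_one_div_lt (half_pos hε)
  obtain ⟨M, hM⟩ := h k
  set M' := max M 0 with hM'
  obtain ⟨N, hN⟩ := exists_nat_gt (M' / (ε / 2))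
  refine ⟨N + 1, fun n hn => ?_⟩
  have hnR : (0 : ℝ) < n := by
    have : 0 < n := by omega
    exact_mod_cast this
  have hinv : (n : ℝ)⁻¹ * n = 1 := inv_mul_cancel₀ (ne_of_gt hnR)
  have hninv : (0 : ℝ) < (n : ℝ)⁻¹ := inv_pos.mpr hnR
  have hNn : (N : ℝ) ≤ n := by exact_mod_cast Nat.le_of_succ_le hn
  rw [Real.dist_eq]
  have h1 : (n : ℝ)⁻¹ * u n - I = (n : ℝ)⁻¹ * (u n - n * I) := by
    rw [mul_sub]
    congr 1
    rw [← mul_assoc, hinv, one_mul]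
  rw [h1, abs_mul, abs_inv, Nat.abs_cast]
  have h2 : |u n - n * I| ≤ n * (1 / (k + 1)) + M' :=
    le_trans (hM n) (by have := le_max_left M (0:ℝ); linarith)
  have h3 : M' < ε / 2 * n := by
    have h4 := (div_lt_iff₀ (half_pos hε)).mp hN
    nlinarith
  have hη : (1 : ℝ) / (k + 1) < ε / 2 := hk
  calc (n : ℝ)⁻¹ * |u n - n * I| ≤ (n : ℝ)⁻¹ * (n * (1 / (k + 1)) + M') :=
        mul_le_mul_of_nonneg_left h2 (le_of_lt hninv)
    _ < ε := by nlinarith [mul_lt_mul_of_pos_left h3 hninv,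
        mul_lt_mul_of_pos_left hη hnR]

/-- Birkhoff's pointwise ergodic theorem, ergodic case. -/
theorem birkhoff_ergodic (P : Measure Ω) [IsProbabilityMeasure P]
    {T : Ω → Ω} (hT : Ergodic T P) {f : Ω → ℝ}
    (hfm : Measurable f) (hfi : Integrable f P) :
    ∀ᵐ ω ∂P, Tendsto (fun n : ℕ => (n : ℝ)⁻¹ * ∑ t ∈ Finset.range n, f (T^[t] ω))
      atTop (𝓝 (∫ ω', f ω' ∂P)) := by
  set I : ℝ := ∫ ω', f ω' ∂P with hI
  have hup : ∀ᵐ ω ∂P, ∀ k : ℕ, ∃ M : ℝ, ∀ n : ℕ,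
      ∑ t ∈ Finset.range n, f (T^[t] ω) ≤ n * (I + 1 / (k + 1)) + M := by
    rw [ae_all_iff]
    intro k
    have : (0:ℝ) < 1 / (k + 1) := by positivity
    exact birkhoff_upper P hT hfm hfi this
  have hlo : ∀ᵐ ω ∂P, ∀ k : ℕ, ∃ M : ℝ, ∀ n : ℕ,
      -(∑ t ∈ Finset.range n, f (T^[t] ω)) ≤ n * (-I + 1 / (k + 1)) + M := by
    rw [ae_all_iff]
    intro k
    have hpos : (0:ℝ) < 1 / (k + 1) := by positivity
    have h := birkhoff_upper (f := fun ω' => -f ω') P hT hfm.neg hfi.neg hpos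
    rw [integral_neg] at h
    filter_upwards [h] with ω ⟨M, hM⟩
    refine ⟨M, fun n => ?_⟩
    have h2 := hM n
    simp only [Finset.sum_neg_distrib] at h2
    exact h2
  filter_upwards [hup, hlo] with ω h1 h2
  apply tendsto_of_linear_bounds
  intro k
  obtain ⟨M₁, hM₁⟩ := h1 k
  obtain ⟨M₂, hM₂⟩ := h2 k
  refine ⟨max M₁ M₂, fun n => ?_⟩
  have hb1 := hM₁ n
  have hb2 := hM₂ n
  have hl1 := le_max_left M₁ M₂
  have hl2 := le_max_right M₁ M₂
  rw [abs_le]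
  constructor <;> [skip; skip] <;> nlinarith

end S2


private lemma ciSup_eq_ciSup_dense {X : Type*} [TopologicalSpace X] [CompactSpace X]
    [Nonempty X] {D : Set X} (hD : Dense D) {ψ : X → ℝ} (hψ : Continuous ψ) :
    ⨆ x, ψ x = ⨆ d : D, ψ (d : X) := by
  have hne : D.Nonempty := hD.nonempty
  haveI : Nonempty ↥D := hne.to_subtype
  have hbdd : BddAbove (Set.range ψ) := (isCompact_range hψ).bddAbove
  have hbddD : BddAbove (Set.range fun d : D => ψ (d : X)) :=
    hbdd.mono (by rintro y ⟨dx, rfl⟩; exact ⟨dx, rfl⟩)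
  apply le_antisymm
  · apply ciSup_le
    intro x
    have h1 : ψ x ∈ closure (ψ '' D) :=
      (image_closure_subset_closure_image hψ) ⟨x, hD x, rfl⟩
    have h2 : closure (ψ '' D) ⊆ Set.Iic (⨆ d : D, ψ (d : X)) := by
      apply closure_minimal _ isClosed_Iic
      rintro y ⟨dx, hdx, rfl⟩
      exact le_ciSup hbddD (⟨dx, hdx⟩ : D)
    exact h2 h1
  · exact ciSup_le fun d => le_ciSup hbdd (d : X)

section S3
variable {Ω : Type*} [MeasurableSpace Ω] {d : ℕ}

/-- The upper bracket: supremum of `ρ θ' ω` over `θ'` in `Θ` within distance `1/(m+1)` of `θ0`. -/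
noncomputable def brSup (ρ : EuclideanSpace ℝ (Fin d) → Ω → ℝ)
    (Θ : Set (EuclideanSpace ℝ (Fin d))) (θ0 : EuclideanSpace ℝ (Fin d)) (m : ℕ) (ω : Ω) : ℝ :=
  ⨆ θ' : ↥(Θ ∩ Metric.closedBall θ0 (1 / (m + 1))), ρ (θ' : EuclideanSpace ℝ (Fin d)) ω

variable {Θ : Set (EuclideanSpace ℝ (Fin d))} {f : EuclideanSpace ℝ (Fin d) → Ω → ℝ}
  {G : Ω → ℝ} {θ0 : EuclideanSpace ℝ (Fin d)}

private lemma brSup_mem (hθ0 : θ0 ∈ Θ) (m : ℕ) :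
    θ0 ∈ Θ ∩ Metric.closedBall θ0 (1 / (m + 1)) :=
  ⟨hθ0, Metric.mem_closedBall_self (by positivity)⟩

private lemma brSup_bddAbove (hG : ∀ ω, ∀ θ ∈ Θ, |f θ ω| ≤ G ω) (m : ℕ) (ω : Ω) :
    BddAbove (Set.range fun θ' : ↥(Θ ∩ Metric.closedBall θ0 (1 / (m + 1))) =>
      f (θ' : EuclideanSpace ℝ (Fin d)) ω) := by
  refine ⟨G ω, ?_⟩
  rintro y ⟨θ', rfl⟩
  exact le_trans (le_abs_self _) (hG ω θ' θ'.2.1)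

private lemma brSup_ge (hG : ∀ ω, ∀ θ ∈ Θ, |f θ ω| ≤ G ω) (m : ℕ) (ω : Ω) :
    ∀ θ' ∈ Θ ∩ Metric.closedBall θ0 (1 / (m + 1)), f θ' ω ≤ brSup f Θ θ0 m ω :=
  fun θ' hθ' => le_ciSup (brSup_bddAbove hG m ω) (⟨θ', hθ'⟩ : ↥(Θ ∩ _))

private lemma brSup_le (hθ0 : θ0 ∈ Θ) (m : ℕ) (ω : Ω) {c : ℝ}
    (hc : ∀ θ' ∈ Θ ∩ Metric.closedBall θ0 (1 / (m + 1)), f θ' ω ≤ c) :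
    brSup f Θ θ0 m ω ≤ c := by
  haveI : Nonempty ↥(Θ ∩ Metric.closedBall θ0 (1 / (m + 1))) := ⟨⟨θ0, brSup_mem hθ0 m⟩⟩
  exact ciSup_le fun θ' => hc θ' θ'.2

private lemma brSup_abs_le (hθ0 : θ0 ∈ Θ) (hG : ∀ ω, ∀ θ ∈ Θ, |f θ ω| ≤ G ω) (m : ℕ) (ω : Ω) :
    |brSup f Θ θ0 m ω| ≤ G ω := by
  rw [abs_le]
  constructor
  · have h1 : -G ω ≤ f θ0 ω := neg_le_of_abs_le (hG ω θ0 hθ0)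
    exact le_trans h1 (brSup_ge hG m ω θ0 (brSup_mem hθ0 m))
  · exact brSup_le hθ0 m ω fun θ' hθ' => le_trans (le_abs_self _) (hG ω θ' hθ'.1)

private lemma brSup_meas (hΘcomp : IsCompact Θ)
    (hfcont : ∀ ω, ContinuousOn (fun θ => f θ ω) Θ)
    (hfmeas : ∀ θ, Measurable (fun ω => f θ ω)) (hθ0 : θ0 ∈ Θ) (m : ℕ) :
    Measurable (brSup f Θ θ0 m) := by
  set K := Θ ∩ Metric.closedBall θ0 (1 / (m + 1)) with hK
  have hKcomp : IsCompact K := hΘcomp.inter_right Metric.isClosed_closedBall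
  haveI : CompactSpace ↥K := isCompact_iff_compactSpace.mp hKcomp
  haveI : Nonempty ↥K := ⟨⟨θ0, brSup_mem hθ0 m⟩⟩
  obtain ⟨D, hDc, hDd⟩ := TopologicalSpace.exists_countable_dense ↥K
  haveI : Countable ↥D := hDc.to_subtype
  have heq : brSup f Θ θ0 m = fun ω => ⨆ dd : D, f (((dd : ↥K) : _)) ω := by
    funext ω
    exact ciSup_eq_ciSup_dense hDd
      (ContinuousOn.restrict ((hfcont ω).mono Set.inter_subset_left))
  rw [heq]
  exact Measurable.iSup fun dd => hfmeas _

private lemma brSup_int (P : Measure Ω) [IsProbabilityMeasure P] (hΘcomp : IsCompact Θ)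
    (hfcont : ∀ ω, ContinuousOn (fun θ => f θ ω) Θ)
    (hfmeas : ∀ θ, Measurable (fun ω => f θ ω)) (hθ0 : θ0 ∈ Θ)
    (hG : ∀ ω, ∀ θ ∈ Θ, |f θ ω| ≤ G ω) (hGint : Integrable G P) (m : ℕ) :
    Integrable (brSup f Θ θ0 m) P :=
  hGint.mono' (brSup_meas hΘcomp hfcont hfmeas hθ0 m).aestronglyMeasurable
    (ae_of_all _ fun ω => by rw [Real.norm_eq_abs]; exact brSup_abs_le hθ0 hG m ω)

private lemma brSup_tendsto (hfcont : ∀ ω, ContinuousOn (fun θ => f θ ω) Θ)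
    (hG : ∀ ω, ∀ θ ∈ Θ, |f θ ω| ≤ G ω) (hθ0 : θ0 ∈ Θ) (ω : Ω) :
    Tendsto (fun m => brSup f Θ θ0 m ω) atTop (𝓝 (f θ0 ω)) := by
  rw [Metric.tendsto_atTop]
  intro η hη
  obtain ⟨δ, hδpos, hδ⟩ := Metric.continuousWithinAt_iff.mp (hfcont ω θ0 hθ0) (η / 2)
    (half_pos hη)
  obtain ⟨m0, hm0⟩ := exists_nat_one_div_lt hδpos
  refine ⟨m0, fun m hm => ?_⟩
  have hrad : (1 : ℝ) / (m + 1) < δ := by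
    refine lt_of_le_of_lt ?_ hm0
    apply one_div_le_one_div_of_le
    · positivity
    · have : (m0 : ℝ) ≤ m := Nat.cast_le.mpr hm
      push_cast; linarith
  have hub : brSup f Θ θ0 m ω ≤ f θ0 ω + η / 2 := by
    apply brSup_le hθ0
    intro θ' hθ'
    have hd : dist θ' θ0 < δ := lt_of_le_of_lt hθ'.2 hrad
    have := hδ hθ'.1 hd
    rw [Real.dist_eq, abs_lt] at this
    linarith [this.2]
  have hlb : f θ0 ω ≤ brSup f Θ θ0 m ω := brSup_ge hG m ω θ0 (brSup_mem hθ0 m)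
  rw [Real.dist_eq, abs_lt]
  constructor <;> linarith

private lemma brSup_integral_eventually (P : Measure Ω) [IsProbabilityMeasure P]
    (hΘcomp : IsCompact Θ) (hfcont : ∀ ω, ContinuousOn (fun θ => f θ ω) Θ)
    (hfmeas : ∀ θ, Measurable (fun ω => f θ ω)) (hθ0 : θ0 ∈ Θ)
    (hG : ∀ ω, ∀ θ ∈ Θ, |f θ ω| ≤ G ω) (hGint : Integrable G P) {ε : ℝ} (hε : 0 < ε) :
    ∀ᶠ m : ℕ in atTop, ∫ ω, brSup f Θ θ0 m ω ∂P ≤ (∫ ω, f θ0 ω ∂P) + ε := by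
  have htend : Tendsto (fun m => ∫ ω, brSup f Θ θ0 m ω ∂P) atTop (𝓝 (∫ ω, f θ0 ω ∂P)) := by
    apply tendsto_integral_of_dominated_convergence G
      (fun m => (brSup_meas hΘcomp hfcont hfmeas hθ0 m).aestronglyMeasurable) hGint
    · exact fun m => ae_of_all _ fun ω => by
        rw [Real.norm_eq_abs]; exact brSup_abs_le hθ0 hG m ω
    · exact ae_of_all _ fun ω => brSup_tendsto hfcont hG hθ0 ω
  have := htend.eventually_le_const (lt_add_of_pos_right _ hε)
  exact this
end S3

section OneSided
variable {Ω : Type*} [MeasurableSpace Ω] {d : ℕ}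
  {Θ : Set (EuclideanSpace ℝ (Fin d))} {f : EuclideanSpace ℝ (Fin d) → Ω → ℝ} {G : Ω → ℝ}

private lemma one_sided (P : Measure Ω) [IsProbabilityMeasure P]
    {T : Ω → Ω} (hT : Ergodic T P)
    (hΘcomp : IsCompact Θ)
    (hfcont : ∀ ω, ContinuousOn (fun θ => f θ ω) Θ)
    (hfmeas : ∀ θ, Measurable (fun ω => f θ ω))
    (hG : ∀ ω, ∀ θ ∈ Θ, |f θ ω| ≤ G ω) (hGint : Integrable G P)
    {ε : ℝ} (hε : 0 < ε) :
    ∀ᵐ ω ∂P, ∀ᶠ n : ℕ in atTop, ∀ θ ∈ Θ,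
      (n : ℝ)⁻¹ * ∑ t ∈ Finset.range n, f θ (T^[t] ω) ≤ (∫ ω', f θ ω' ∂P) + ε := by
  classical
  have hε3 : 0 < ε / 3 := by linarith
  set g : EuclideanSpace ℝ (Fin d) → Ω → ℝ := fun θ ω => -(f θ ω) with hgdef
  have hgcont : ∀ ω, ContinuousOn (fun θ => g θ ω) Θ := fun ω => (hfcont ω).neg
  have hgmeas : ∀ θ, Measurable (fun ω => g θ ω) := fun θ => (hfmeas θ).neg
  have hGg : ∀ ω, ∀ θ ∈ Θ, |g θ ω| ≤ G ω := fun ω θ hθ => by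
    rw [hgdef]; simpa [abs_neg] using hG ω θ hθ
  have hfint : ∀ θ ∈ Θ, Integrable (fun ω => f θ ω) P := fun θ hθ =>
    hGint.mono' (hfmeas θ).aestronglyMeasurable
      (ae_of_all _ fun ω => by rw [Real.norm_eq_abs]; exact hG ω θ hθ)
  -- choose a good radius for each point of Θ
  have hchoice : ∀ θ0 : Θ, ∃ m : ℕ,
      (∫ ω, brSup f Θ (θ0 : EuclideanSpace ℝ (Fin d)) m ω ∂P ≤
        (∫ ω, f (θ0 : EuclideanSpace ℝ (Fin d)) ω ∂P) + ε / 3) ∧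
      (∫ ω, brSup g Θ (θ0 : EuclideanSpace ℝ (Fin d)) m ω ∂P ≤
        (∫ ω, g (θ0 : EuclideanSpace ℝ (Fin d)) ω ∂P) + ε / 3) := by
    intro θ0
    exact ((brSup_integral_eventually P hΘcomp hfcont hfmeas θ0.2 hG hGint hε3).and
      (brSup_integral_eventually P hΘcomp hgcont hgmeas θ0.2 hGg hGint hε3)).exists
  choose m hm1 hm2 using hchoice
  -- finite subcover
  have hrpos : ∀ i : Θ, (0:ℝ) < 1 / (m i + 1) := fun i => by positivity
  obtain ⟨t, ht⟩ := hΘcomp.elim_finite_subcover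
    (fun i : Θ => Metric.ball (i : EuclideanSpace ℝ (Fin d)) (1 / (m i + 1)))
    (fun i => Metric.isOpen_ball)
    (fun θ hθ => Set.mem_iUnion.mpr ⟨⟨θ, hθ⟩, Metric.mem_ball_self (hrpos ⟨θ, hθ⟩)⟩)
  -- Birkhoff for the finitely many upper brackets
  have hbirk : ∀ᵐ ω ∂P, ∀ i ∈ (t : Set ↥Θ), Tendsto
      (fun n : ℕ => (n : ℝ)⁻¹ * ∑ t' ∈ Finset.range n,
        brSup f Θ (i : EuclideanSpace ℝ (Fin d)) (m i) (T^[t'] ω)) atTop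
      (𝓝 (∫ ω', brSup f Θ (i : EuclideanSpace ℝ (Fin d)) (m i) ω' ∂P)) := by
    rw [ae_ball_iff t.countable_toSet]
    intro i _
    exact birkhoff_ergodic P hT (brSup_meas hΘcomp hfcont hfmeas i.2 (m i))
      (brSup_int P hΘcomp hfcont hfmeas i.2 hG hGint (m i))
  filter_upwards [hbirk] with ω hω
  have hev : ∀ᶠ n : ℕ in atTop, ∀ i ∈ t,
      (n : ℝ)⁻¹ * ∑ t' ∈ Finset.range n,
        brSup f Θ (i : EuclideanSpace ℝ (Fin d)) (m i) (T^[t'] ω) ≤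
      (∫ ω', brSup f Θ (i : EuclideanSpace ℝ (Fin d)) (m i) ω' ∂P) + ε / 3 := by
    rw [eventually_all_finset]
    intro i hi
    exact (hω i hi).eventually_le_const (lt_add_of_pos_right _ hε3)
  filter_upwards [hev] with n hn
  intro θ hθ
  obtain ⟨i, hit, hθball⟩ := Set.mem_iUnion₂.mp (ht hθ)
  have hθK : θ ∈ Θ ∩ Metric.closedBall (i : EuclideanSpace ℝ (Fin d)) (1 / (m i + 1)) :=
    ⟨hθ, Metric.ball_subset_closedBall hθball⟩
  -- chain of inequalities
  have ha : (n : ℝ)⁻¹ * ∑ t' ∈ Finset.range n, f θ (T^[t'] ω) ≤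
      (n : ℝ)⁻¹ * ∑ t' ∈ Finset.range n,
        brSup f Θ (i : EuclideanSpace ℝ (Fin d)) (m i) (T^[t'] ω) :=
    mul_le_mul_of_nonneg_left
      (Finset.sum_le_sum fun t' _ => brSup_ge hG (m i) (T^[t'] ω) θ hθK)
      (by positivity)
  have hb := hn i hit
  have hc := hm1 i
  -- ∫ f i ≤ ∫ f θ + ε/3, via the bracket for g = -f
  have hd : ∫ ω', f (i : EuclideanSpace ℝ (Fin d)) ω' ∂P ≤ (∫ ω', f θ ω' ∂P) + ε / 3 := by
    have h1 : ∫ ω', g θ ω' ∂P ≤ ∫ ω', brSup g Θ (i : EuclideanSpace ℝ (Fin d)) (m i) ω' ∂P :=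
      integral_mono ((hfint θ hθ).neg)
        (brSup_int P hΘcomp hgcont hgmeas i.2 hGg hGint (m i))
        (fun ω' => brSup_ge hGg (m i) ω' θ hθK)
    have h2 := hm2 i
    have h3 : ∫ ω', g θ ω' ∂P = -∫ ω', f θ ω' ∂P := by
      rw [hgdef]; exact integral_neg _
    have h4 : ∫ ω', g (i : EuclideanSpace ℝ (Fin d)) ω' ∂P =
        -∫ ω', f (i : EuclideanSpace ℝ (Fin d)) ω' ∂P := by
      rw [hgdef]; exact integral_neg _
    rw [h3] at h1
    rw [h4] at h2
    linarith
  linarith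

end OneSided

/-- Uniform law of large numbers for ergodic sequences on a compact parameter
set: the uniform deviation of the ergodic averages of `ρ(θ, ·)` from their expectations
converges to 0 almost everywhere, and hence in P-measure. -/
theorem uniform_LLN_ergodic
    {Ω : Type*} [MeasurableSpace Ω] (P : Measure Ω) [IsProbabilityMeasure P]
    (T : Ω → Ω) (hT : Ergodic T P)
    {d : ℕ} (hd : 1 ≤ d)
    (Θ : Set (EuclideanSpace ℝ (Fin d))) (hΘne : Θ.Nonempty) (hΘcomp : IsCompact Θ)
    (ρ : EuclideanSpace ℝ (Fin d) → Ω → ℝ)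
    (hρcont : ∀ ω, ContinuousOn (fun θ => ρ θ ω) Θ)
    (hρmeas : ∀ θ, Measurable (fun ω => ρ θ ω))
    (hρint : Integrable (fun ω => ⨆ θ : Θ, |ρ (θ : EuclideanSpace ℝ (Fin d)) ω|) P) :
    (∀ᵐ ω ∂P, Tendsto
        (fun n : ℕ => ⨆ θ : Θ,
          |(n : ℝ)⁻¹ * ∑ t ∈ Finset.range n, ρ (θ : EuclideanSpace ℝ (Fin d)) (T^[t] ω)
            - ∫ ω', ρ (θ : EuclideanSpace ℝ (Fin d)) ω' ∂P|)
        atTop (𝓝 0)) ∧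
    TendstoInMeasure P
      (fun (n : ℕ) ω => ⨆ θ : Θ,
        |(n : ℝ)⁻¹ * ∑ t ∈ Finset.range n, ρ (θ : EuclideanSpace ℝ (Fin d)) (T^[t] ω)
          - ∫ ω', ρ (θ : EuclideanSpace ℝ (Fin d)) ω' ∂P|)
      atTop (fun _ => 0) := by
  classical
  haveI hΘne' : Nonempty ↥Θ := hΘne.to_subtype
  obtain ⟨θa, hθa⟩ := hΘne
  have hbdd : ∀ ω, BddAbove (Set.range fun θ : Θ => |ρ (θ : EuclideanSpace ℝ (Fin d)) ω|) := by
    intro ω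
    have h1 : IsCompact ((fun θ => |ρ θ ω|) '' Θ) :=
      hΘcomp.image_of_continuousOn (hρcont ω).abs
    have h2 := h1.bddAbove
    rwa [Set.image_eq_range] at h2
  set G : Ω → ℝ := fun ω => ⨆ θ : Θ, |ρ (θ : EuclideanSpace ℝ (Fin d)) ω| with hGdef
  have hG : ∀ ω, ∀ θ ∈ Θ, |ρ θ ω| ≤ G ω := fun ω θ hθ => le_ciSup (hbdd ω) (⟨θ, hθ⟩ : Θ)
  have hGint : Integrable G P := hρint
  have hGneg : ∀ ω, ∀ θ ∈ Θ, |-(ρ θ ω)| ≤ G ω := fun ω θ hθ => by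
    simpa [abs_neg] using hG ω θ hθ
  -- one-sided uniform bounds
  have hA : ∀ j : ℕ, ∀ᵐ ω ∂P, ∀ᶠ n : ℕ in atTop, ∀ θ ∈ Θ,
      (n : ℝ)⁻¹ * ∑ t ∈ Finset.range n, ρ θ (T^[t] ω) ≤
        (∫ ω', ρ θ ω' ∂P) + 1 / (j + 1) :=
    fun j => one_sided P hT hΘcomp hρcont hρmeas hG hGint (by positivity)
  have hB : ∀ j : ℕ, ∀ᵐ ω ∂P, ∀ᶠ n : ℕ in atTop, ∀ θ ∈ Θ,
      (n : ℝ)⁻¹ * ∑ t ∈ Finset.range n, -(ρ θ (T^[t] ω)) ≤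
        (∫ ω', -(ρ θ ω') ∂P) + 1 / (j + 1) :=
    fun j => one_sided (f := fun θ ω => -(ρ θ ω)) P hT hΘcomp
      (fun ω => (hρcont ω).neg) (fun θ => (hρmeas θ).neg) hGneg hGint (by positivity)
  have haeTend : ∀ᵐ ω ∂P, Tendsto
      (fun n : ℕ => ⨆ θ : Θ,
        |(n : ℝ)⁻¹ * ∑ t ∈ Finset.range n, ρ (θ : EuclideanSpace ℝ (Fin d)) (T^[t] ω)
          - ∫ ω', ρ (θ : EuclideanSpace ℝ (Fin d)) ω' ∂P|)
      atTop (𝓝 0) := by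
    filter_upwards [ae_all_iff.mpr hA, ae_all_iff.mpr hB] with ω h1 h2
    rw [Metric.tendsto_atTop]
    intro ε' hε'
    obtain ⟨j, hj⟩ := exists_nat_one_div_lt hε'
    have hev := (h1 j).and (h2 j)
    rw [eventually_atTop] at hev
    obtain ⟨N, hN⟩ := hev
    refine ⟨N, fun n hn => ?_⟩
    obtain ⟨hn1, hn2⟩ := hN n hn
    have hptw : ∀ θ : Θ,
        |(n : ℝ)⁻¹ * ∑ t ∈ Finset.range n, ρ (θ : EuclideanSpace ℝ (Fin d)) (T^[t] ω)
          - ∫ ω', ρ (θ : EuclideanSpace ℝ (Fin d)) ω' ∂P| ≤ 1 / (j + 1) := by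
      intro θ
      have u := hn1 (θ : EuclideanSpace ℝ (Fin d)) θ.2
      have v := hn2 (θ : EuclideanSpace ℝ (Fin d)) θ.2
      rw [abs_le]
      constructor
      · have hsum : ∑ t ∈ Finset.range n, -(ρ (θ : EuclideanSpace ℝ (Fin d)) (T^[t] ω)) =
            -∑ t ∈ Finset.range n, ρ (θ : EuclideanSpace ℝ (Fin d)) (T^[t] ω) := by simp
        have hint : ∫ ω', -(ρ (θ : EuclideanSpace ℝ (Fin d)) ω') ∂P =
            -∫ ω', ρ (θ : EuclideanSpace ℝ (Fin d)) ω' ∂P := integral_neg _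
        rw [hsum, hint, mul_neg] at v
        linarith
      · linarith
    have hFle : (⨆ θ : Θ,
        |(n : ℝ)⁻¹ * ∑ t ∈ Finset.range n, ρ (θ : EuclideanSpace ℝ (Fin d)) (T^[t] ω)
          - ∫ ω', ρ (θ : EuclideanSpace ℝ (Fin d)) ω' ∂P|) ≤ 1 / (j + 1) := ciSup_le hptw
    have hFge : (0:ℝ) ≤ ⨆ θ : Θ,
        |(n : ℝ)⁻¹ * ∑ t ∈ Finset.range n, ρ (θ : EuclideanSpace ℝ (Fin d)) (T^[t] ω)
          - ∫ ω', ρ (θ : EuclideanSpace ℝ (Fin d)) ω' ∂P| := by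
      have hbddF : BddAbove (Set.range fun θ : Θ =>
          |(n : ℝ)⁻¹ * ∑ t ∈ Finset.range n, ρ (θ : EuclideanSpace ℝ (Fin d)) (T^[t] ω)
            - ∫ ω', ρ (θ : EuclideanSpace ℝ (Fin d)) ω' ∂P|) := by
        refine ⟨1 / ((j:ℝ) + 1), ?_⟩
        rintro y ⟨θ, rfl⟩
        exact hptw θ
      exact le_trans (abs_nonneg _) (le_ciSup hbddF (⟨θa, hθa⟩ : Θ))
    rw [Real.dist_eq, sub_zero, abs_of_nonneg hFge]
    exact lt_of_le_of_lt hFle hj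
  refine ⟨haeTend, ?_⟩
  -- measurability of the uniform deviation
  haveI : CompactSpace ↥Θ := isCompact_iff_compactSpace.mp hΘcomp
  obtain ⟨D, hDc, hDd⟩ := TopologicalSpace.exists_countable_dense ↥Θ
  haveI : Countable ↥D := hDc.to_subtype
  have hIcont : ContinuousOn (fun θ => ∫ ω', ρ θ ω' ∂P) Θ := by
    intro θ0 hθ0
    apply continuousWithinAt_of_dominated (bound := G)
    · exact Eventually.of_forall fun θ => (hρmeas θ).aestronglyMeasurable
    · filter_upwards [self_mem_nhdsWithin] with θ hθ
      exact ae_of_all _ fun ω => by rw [Real.norm_eq_abs]; exact hG ω θ hθ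
    · exact hGint
    · exact ae_of_all _ fun ω => (hρcont ω) θ0 hθ0
  have hFmeas : ∀ n : ℕ, Measurable (fun ω => ⨆ θ : Θ,
      |(n : ℝ)⁻¹ * ∑ t ∈ Finset.range n, ρ (θ : EuclideanSpace ℝ (Fin d)) (T^[t] ω)
        - ∫ ω', ρ (θ : EuclideanSpace ℝ (Fin d)) ω' ∂P|) := by
    intro n
    have heq : (fun ω => ⨆ θ : Θ,
        |(n : ℝ)⁻¹ * ∑ t ∈ Finset.range n, ρ (θ : EuclideanSpace ℝ (Fin d)) (T^[t] ω)
          - ∫ ω', ρ (θ : EuclideanSpace ℝ (Fin d)) ω' ∂P|) = fun ω => ⨆ dd : D,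
        |(n : ℝ)⁻¹ * ∑ t ∈ Finset.range n,
            ρ (((dd : ↥Θ) : EuclideanSpace ℝ (Fin d))) (T^[t] ω)
          - ∫ ω', ρ (((dd : ↥Θ) : EuclideanSpace ℝ (Fin d))) ω' ∂P| := by
      funext ω
      have hcont : ContinuousOn (fun θ =>
          |(n : ℝ)⁻¹ * ∑ t ∈ Finset.range n, ρ θ (T^[t] ω)
            - ∫ ω', ρ θ ω' ∂P|) Θ := by
        apply ContinuousOn.abs
        apply ContinuousOn.sub
        · exact continuousOn_const.mul (continuousOn_finset_sum _ fun t _ => hρcont (T^[t] ω))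
        · exact hIcont
      exact ciSup_eq_ciSup_dense hDd (ContinuousOn.restrict hcont)
    rw [heq]
    apply Measurable.iSup
    intro dd
    apply Measurable.abs
    apply Measurable.sub
    · exact (Finset.measurable_sum _ fun t _ =>
        (hρmeas _).comp (hT.toMeasurePreserving.measurable.iterate t)).const_mul _
    · exact measurable_const
  exact tendstoInMeasure_of_tendsto_ae (fun n => (hFmeas n).aestronglyMeasurable) haeTend
end

section
/- Consistency of M-estimators under uniform convergence in probability: Let (Ω, 𝒜, P) be a probability space, d ≥ 1, Θ ⊆ ℝ^d a nonempty compact set, and Q : Θ → ℝ a continuous function attaining a unique minimum on Θ at θ*. Let Qₙ : Θ × Ω → ℝ be such that θ ↦ Qₙ(θ, ω) is continuous on Θ for every ω, ω ↦ Qₙ(θ, ω) is measurable for every θ, and the real random variables ω ↦ sup_{θ∈Θ} |Qₙ(θ, ω) − Q(θ)| converge to 0 in P-measure as n → ∞. Then any sequence of measurable maps θ̂ₙ : Ω → Θ satisfying Qₙ(θ̂ₙ(ω), ω) = min_{θ∈Θ} Qₙ(θ, ω) for P-almost every ω satisfies that ‖θ̂ₙ − θ*‖ converges to 0 in P-measure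 as n → ∞. -/
open MeasureTheory Filter Topology

/-- Consistency of M-estimators under uniform convergence in probability:
if the sample criteria `Qₙ` converge uniformly on the compact set `Θ` in P-measure to a
continuous population criterion `Q` with unique minimizer `θstar`, then any sequence of
measurable minimizers of `Qₙ` over `Θ` converges to `θstar` in P-measure. -/
theorem Mestimator_consistency_uniform_convergence
    {Ω : Type*} [MeasurableSpace Ω] (P : Measure Ω) [IsProbabilityMeasure P]
    {d : ℕ} (hd : 1 ≤ d)
    (Θ : Set (EuclideanSpace ℝ (Fin d))) (hΘne : Θ.Nonempty) (hΘcomp : IsCompact Θ)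
    (Q : EuclideanSpace ℝ (Fin d) → ℝ) (hQcont : ContinuousOn Q Θ)
    (θstar : EuclideanSpace ℝ (Fin d))
    (hθstar_mem : θstar ∈ Θ)
    (hθstar_min : ∀ θ ∈ Θ, Q θstar ≤ Q θ)
    (hθstar_uniq : ∀ θ ∈ Θ, θ ≠ θstar → Q θstar < Q θ)
    (Qn : ℕ → EuclideanSpace ℝ (Fin d) → Ω → ℝ)
    (hQncont : ∀ n ω, ContinuousOn (fun θ => Qn n θ ω) Θ)
    (hQnmeas : ∀ n θ, Measurable (fun ω => Qn n θ ω))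
    (hQnconv : TendstoInMeasure P
      (fun (n : ℕ) ω => ⨆ θ : Θ, |Qn n (θ : EuclideanSpace ℝ (Fin d)) ω
        - Q (θ : EuclideanSpace ℝ (Fin d))|) atTop (fun _ => 0))
    (θhat : ℕ → Ω → EuclideanSpace ℝ (Fin d))
    (hθhat_meas : ∀ n, Measurable (θhat n))
    (hθhat_min : ∀ n, ∀ᵐ ω ∂P, θhat n ω ∈ Θ ∧
      ∀ θ ∈ Θ, Qn n (θhat n ω) ω ≤ Qn n θ ω) :
    TendstoInMeasure P (fun n ω => θhat n ω) atTop (fun _ => θstar) := by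
  rw [tendstoInMeasure_iff_dist]
  intro ε hε
  -- bad sets
  set B : ℕ → Set Ω := fun n => {ω | ¬ (θhat n ω ∈ Θ ∧ ∀ θ ∈ Θ, Qn n (θhat n ω) ω ≤ Qn n θ ω)}
    with hB
  have hBnull : ∀ n, P (B n) = 0 := fun n => (hθhat_min n)
  set K : Set (EuclideanSpace ℝ (Fin d)) := Θ ∩ {θ | ε ≤ dist θ θstar} with hK
  have hKclosed : IsClosed {θ : EuclideanSpace ℝ (Fin d) | ε ≤ dist θ θstar} :=
    isClosed_le continuous_const (continuous_id.dist continuous_const)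
  have hKcomp : IsCompact K := hΘcomp.inter_right hKclosed
  by_cases hKne : K.Nonempty
  · obtain ⟨θ₁, hθ₁K, hθ₁min'⟩ :=
      hKcomp.exists_isMinOn hKne (hQcont.mono Set.inter_subset_left)
    have hθ₁min : ∀ θ ∈ K, Q θ₁ ≤ Q θ := fun θ hθ => hθ₁min' hθ
    have hθ₁Θ : θ₁ ∈ Θ := hθ₁K.1
    have hθ₁ne : θ₁ ≠ θstar := by
      intro h
      have h2 := hθ₁K.2
      rw [h] at h2
      simp at h2
      linarith
    set δ := (Q θ₁ - Q θstar) / 3 with hδ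
    have hδpos : 0 < δ := by
      have := hθstar_uniq θ₁ hθ₁Θ hθ₁ne; simp only [hδ]; linarith
    have hsub : ∀ n, {ω | ε ≤ dist (θhat n ω) θstar} ⊆
        {ω | δ ≤ dist ((⨆ θ : Θ, |Qn n (θ : EuclideanSpace ℝ (Fin d)) ω
          - Q (θ : EuclideanSpace ℝ (Fin d))|)) (0:ℝ)} ∪ B n := by
      intro n ω hω
      by_cases hG : θhat n ω ∈ Θ ∧ ∀ θ ∈ Θ, Qn n (θhat n ω) ω ≤ Qn n θ ω
      · left
        obtain ⟨hmem, hmin⟩ := hG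
        have hbdd : BddAbove (Set.range fun θ : Θ =>
            |Qn n (θ : EuclideanSpace ℝ (Fin d)) ω - Q (θ : EuclideanSpace ℝ (Fin d))|) := by
          have h := hΘcomp.bddAbove_image (((hQncont n ω).sub hQcont).abs)
          rwa [Set.image_eq_range] at h
        set S := ⨆ θ : Θ, |Qn n (θ : EuclideanSpace ℝ (Fin d)) ω
          - Q (θ : EuclideanSpace ℝ (Fin d))| with hS
        have hle : ∀ θ : Θ, |Qn n (θ : EuclideanSpace ℝ (Fin d)) ω
            - Q (θ : EuclideanSpace ℝ (Fin d))| ≤ S := fun θ => le_ciSup hbdd θ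
        have hδS : δ ≤ S := by
          by_contra hlt
          push_neg at hlt
          have h1 : |Qn n (θhat n ω) ω - Q (θhat n ω)| < δ :=
            lt_of_le_of_lt (hle ⟨θhat n ω, hmem⟩) hlt
          have h2 : |Qn n θstar ω - Q θstar| < δ :=
            lt_of_le_of_lt (hle ⟨θstar, hθstar_mem⟩) hlt
          have h3 : Q (θhat n ω) < Qn n (θhat n ω) ω + δ := by
            rw [abs_sub_comm] at h1
            have := abs_lt.mp h1
            linarith [this.1, this.2]
          have h4 : Qn n θstar ω < Q θstar + δ := by
            have := abs_lt.mp h2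
            linarith [this.1, this.2]
          have h5 : Qn n (θhat n ω) ω ≤ Qn n θstar ω := hmin θstar hθstar_mem
          have hKmem : θhat n ω ∈ K := ⟨hmem, hω⟩
          have h6 : Q θ₁ ≤ Q (θhat n ω) := hθ₁min _ hKmem
          simp only [hδ] at h3 h4
          linarith
        simp only [Set.mem_setOf_eq, Real.dist_eq, sub_zero]
        exact hδS.trans (le_abs_self S)
      · right
        simpa [hB] using hG
    have hP : ∀ n, P {ω | ε ≤ dist (θhat n ω) θstar} ≤
        P {ω | δ ≤ dist ((⨆ θ : Θ, |Qn n (θ : EuclideanSpace ℝ (Fin d)) ω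
          - Q (θ : EuclideanSpace ℝ (Fin d))|)) (0:ℝ)} := by
      intro n
      calc P {ω | ε ≤ dist (θhat n ω) θstar} ≤ P (_ ∪ B n) := measure_mono (hsub n)
        _ ≤ P _ + P (B n) := measure_union_le _ _
        _ = P _ := by rw [hBnull n, add_zero]
    exact tendsto_of_tendsto_of_tendsto_of_le_of_le tendsto_const_nhds
      (tendstoInMeasure_iff_dist.mp hQnconv δ hδpos) (fun n => zero_le) hP
  · -- K empty: event is a.e. empty
    have hP : ∀ n, P {ω | ε ≤ dist (θhat n ω) θstar} = 0 := by
      intro n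
      have hsub : {ω | ε ≤ dist (θhat n ω) θstar} ⊆ B n := by
        intro ω hω
        intro hG
        exact hKne ⟨θhat n ω, hG.1, hω⟩
      exact le_antisymm ((measure_mono hsub).trans (hBnull n).le) zero_le
    simp only [hP]
    exact tendsto_const_nhds
end

section
/- Joint consistency of grouped M-estimators under uniform convergence (deterministic skeleton of the EM consistency theorem): Let (Ω, 𝒜, P) be a probability space, d ≥ 1, Θ ⊆ ℝ^d a nonempty compact set, and 𝒢 a nonempty finite set. Let Q : Θ × 𝒢 → ℝ be continuous in its first argument, assume that for every τ ∈ 𝒢 the function Q(·, τ) attains a unique minimum on Θ at θ*(τ), and that there is τ₀ ∈ 𝒢 with Q(θ, τ) > Q(θ*(τ₀), τ₀) for every θ ∈ Θ and every τ ≠ τ₀. For each n let Qₙ : Θ × 𝒢 × Ω → ℝ be continuous in θ for every (τ, ω), measurable in ω for every (θ, τ), and assume that for every τ ∈ 𝒢 the random variables sup_{θ∈Θ} |Qₙ(θ, τ, ·) − Q(θ, τ)| converge to 0 in P-measure. Then any measurable maps θ̃ₙ : 𝒢 × Ω → Θ with Qₙ(θ̃ₙ(τ, ω), τ, ω) = min_{θ∈Θ}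 Qₙ(θ, τ, ω) and τ̂ₙ : Ω → 𝒢 with Qₙ(θ̃ₙ(τ̂ₙ(ω), ω), τ̂ₙ(ω), ω) = min_{τ∈𝒢} Qₙ(θ̃ₙ(τ, ω), τ, ω) (both for P-almost every ω) satisfy: P(τ̂ₙ ≠ τ₀) → 0 and ‖θ̃ₙ(τ̂ₙ(·), ·) − θ*(τ₀)‖ converges to 0 in P-measure as n → ∞. -/
open MeasureTheory Filter Topology

/-- Joint consistency of grouped M-estimators under uniform convergence
(deterministic skeleton of the EM consistency theorem): under unique minimization for each
group assignment, identification of `τ₀`, and uniform convergence in P-measure of the sample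
criteria, the estimated assignment and the plugged-in parameter estimator are consistent. -/
theorem grouped_Mestimation_joint_consistency
    {Ω : Type*} [MeasurableSpace Ω] (P : Measure Ω) [IsProbabilityMeasure P]
    {d : ℕ} (hd : 1 ≤ d)
    (Θ : Set (EuclideanSpace ℝ (Fin d))) (hΘne : Θ.Nonempty) (hΘcomp : IsCompact Θ)
    {𝒢 : Type*} [Fintype 𝒢] [Nonempty 𝒢] [MeasurableSpace 𝒢] [MeasurableSingletonClass 𝒢]
    (Q : EuclideanSpace ℝ (Fin d) → 𝒢 → ℝ)
    (hQcont : ∀ τ, ContinuousOn (fun θ => Q θ τ) Θ)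
    (θstar : 𝒢 → EuclideanSpace ℝ (Fin d))
    (hθstar_mem : ∀ τ, θstar τ ∈ Θ)
    (hθstar_min : ∀ τ, ∀ θ ∈ Θ, Q (θstar τ) τ ≤ Q θ τ)
    (hθstar_uniq : ∀ τ, ∀ θ ∈ Θ, θ ≠ θstar τ → Q (θstar τ) τ < Q θ τ)
    (τ0 : 𝒢)
    (hident : ∀ θ ∈ Θ, ∀ τ : 𝒢, τ ≠ τ0 → Q (θstar τ0) τ0 < Q θ τ)
    (Qn : ℕ → EuclideanSpace ℝ (Fin d) → 𝒢 → Ω → ℝ)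
    (hQncont : ∀ n τ ω, ContinuousOn (fun θ => Qn n θ τ ω) Θ)
    (hQnmeas : ∀ n θ τ, Measurable (fun ω => Qn n θ τ ω))
    (hQnconv : ∀ τ : 𝒢, TendstoInMeasure P
      (fun (n : ℕ) ω => ⨆ θ : Θ, |Qn n (θ : EuclideanSpace ℝ (Fin d)) τ ω
        - Q (θ : EuclideanSpace ℝ (Fin d)) τ|) atTop (fun _ => 0))
    (θtilde : ℕ → 𝒢 → Ω → EuclideanSpace ℝ (Fin d))
    (hθtilde_meas : ∀ n τ, Measurable (fun ω => θtilde n τ ω))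
    (hθtilde_min : ∀ n τ, ∀ᵐ ω ∂P, θtilde n τ ω ∈ Θ ∧
      ∀ θ ∈ Θ, Qn n (θtilde n τ ω) τ ω ≤ Qn n θ τ ω)
    (τhat : ℕ → Ω → 𝒢)
    (hτhat_meas : ∀ n, Measurable (τhat n))
    (hτhat_min : ∀ n, ∀ᵐ ω ∂P, ∀ τ : 𝒢,
      Qn n (θtilde n (τhat n ω) ω) (τhat n ω) ω ≤ Qn n (θtilde n τ ω) τ ω) :
    Tendsto (fun n => P {ω | τhat n ω ≠ τ0}) atTop (𝓝 0) ∧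
    TendstoInMeasure P (fun n ω => θtilde n (τhat n ω) ω) atTop (fun _ => θstar τ0) := by
  classical
  -- uniform gap for wrong group assignments
  have hm' : ∃ m' > (0:ℝ), ∀ θ ∈ Θ, ∀ τ : 𝒢, τ ≠ τ0 → Q (θstar τ0) τ0 + m' ≤ Q θ τ := by
    by_cases h : ∃ τ : 𝒢, τ ≠ τ0
    · obtain ⟨τ1, hτ1⟩ := h
      have hsne : (Finset.univ.filter (fun τ : 𝒢 => τ ≠ τ0)).Nonempty :=
        ⟨τ1, by simp [hτ1]⟩
      refine ⟨(Finset.univ.filter (fun τ : 𝒢 => τ ≠ τ0)).inf' hsne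
        (fun τ => Q (θstar τ) τ - Q (θstar τ0) τ0), ?_, ?_⟩
      · rw [gt_iff_lt, Finset.lt_inf'_iff]
        intro τ hτ
        have hτne : τ ≠ τ0 := by simpa using hτ
        have := hident (θstar τ) (hθstar_mem τ) τ hτne
        linarith
      · intro θ hθ τ hτ
        have h1 : (Finset.univ.filter (fun τ : 𝒢 => τ ≠ τ0)).inf' hsne
            (fun τ => Q (θstar τ) τ - Q (θstar τ0) τ0) ≤ Q (θstar τ) τ - Q (θstar τ0) τ0 :=
          Finset.inf'_le _ (by simp [hτ])
        have h2 := hθstar_min τ θ hθ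
        linarith
    · exact ⟨1, one_pos, fun θ hθ τ hτ => absurd ⟨τ, hτ⟩ h⟩
  obtain ⟨m', hm'pos, hm'⟩ := hm'
  -- gap for points far from the minimizer
  have hm : ∀ ε : ℝ, 0 < ε → ∃ m > (0:ℝ), ∀ θ ∈ Θ, ε ≤ dist θ (θstar τ0) →
      Q (θstar τ0) τ0 + m ≤ Q θ τ0 := by
    intro ε hε
    set K := Θ ∩ {θ | ε ≤ dist θ (θstar τ0)} with hK
    have hKcomp : IsCompact K := hΘcomp.inter_right
      (isClosed_le continuous_const (continuous_id.dist continuous_const))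
    rcases K.eq_empty_or_nonempty with hKe | hKne
    · refine ⟨1, one_pos, fun θ hθ hd' => ?_⟩
      exact absurd (show θ ∈ K from ⟨hθ, hd'⟩) (by simp [hKe])
    · obtain ⟨θ1, hθ1K, hθ1min⟩ := hKcomp.exists_isMinOn hKne
        ((hQcont τ0).mono Set.inter_subset_left)
      have hθ1Θ : θ1 ∈ Θ := hθ1K.1
      have hθ1ne : θ1 ≠ θstar τ0 := by
        intro hcontra
        have h2 : ε ≤ dist θ1 (θstar τ0) := hθ1K.2
        rw [hcontra, dist_self] at h2
        linarith
      have hpos : Q (θstar τ0) τ0 < Q θ1 τ0 := hθstar_uniq τ0 θ1 hθ1Θ hθ1ne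
      refine ⟨Q θ1 τ0 - Q (θstar τ0) τ0, by linarith, fun θ hθ hd' => ?_⟩
      have := isMinOn_iff.mp hθ1min θ ⟨hθ, hd'⟩
      linarith
  -- main convergence for the joint bad event
  have main : ∀ ε : ℝ, 0 < ε → Tendsto (fun n => P {ω |
      ¬(τhat n ω = τ0 ∧ dist (θtilde n (τhat n ω) ω) (θstar τ0) < ε)}) atTop (𝓝 0) := by
    intro ε hε
    obtain ⟨m, hmpos, hmgap⟩ := hm ε hε
    set η : ℝ := min m m' / 3 with hη
    have hηpos : 0 < η := by positivity
    have h3η_m : 3 * η ≤ m := by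
      have := min_le_left m m'; rw [hη]; linarith
    have h3η_m' : 3 * η ≤ m' := by
      have := min_le_right m m'; rw [hη]; linarith
    -- deterministic key lemma
    have key : ∀ n ω, (∀ τ : 𝒢, ∀ θ ∈ Θ, |Qn n θ τ ω - Q θ τ| ≤ η) →
        (∀ τ, θtilde n τ ω ∈ Θ ∧ ∀ θ ∈ Θ, Qn n (θtilde n τ ω) τ ω ≤ Qn n θ τ ω) →
        (∀ τ : 𝒢, Qn n (θtilde n (τhat n ω) ω) (τhat n ω) ω ≤ Qn n (θtilde n τ ω) τ ω) →
        τhat n ω = τ0 ∧ dist (θtilde n (τhat n ω) ω) (θstar τ0) < ε := by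
      intro n ω happ htmin hτmin
      set s := τhat n ω with hs
      set ts := θtilde n s ω with hts
      have htsΘ : ts ∈ Θ := (htmin s).1
      have e1 : Qn n (θtilde n τ0 ω) τ0 ω ≤ Q (θstar τ0) τ0 + η := by
        have h1 := (htmin τ0).2 (θstar τ0) (hθstar_mem τ0)
        have h2 := happ τ0 (θstar τ0) (hθstar_mem τ0)
        rw [abs_le] at h2
        linarith [h2.1, h2.2]
      have e2 : Qn n ts s ω ≤ Q (θstar τ0) τ0 + η := le_trans (hτmin τ0) e1
      have e3 : Q ts s ≤ Q (θstar τ0) τ0 + 2 * η := by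
        have h2 := happ s ts htsΘ
        rw [abs_le] at h2
        linarith [h2.1, h2.2]
      have hsτ0 : s = τ0 := by
        by_contra hne
        have := hm' ts htsΘ s hne
        linarith
      rw [hsτ0] at e3
      refine ⟨hsτ0, ?_⟩
      by_contra hdist
      push_neg at hdist
      have := hmgap ts htsΘ hdist
      linarith
    -- from small sup to pointwise bound
    have hsup_bound : ∀ n ω (τ : 𝒢),
        (⨆ θ : Θ, |Qn n (θ : EuclideanSpace ℝ (Fin d)) τ ω
          - Q (θ : EuclideanSpace ℝ (Fin d)) τ|) < η →
        ∀ θ ∈ Θ, |Qn n θ τ ω - Q θ τ| ≤ η := by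
      intro n ω τ hlt θ hθ
      have hbdd : BddAbove (Set.range fun θ' : Θ =>
          |Qn n (θ' : EuclideanSpace ℝ (Fin d)) τ ω - Q (θ' : EuclideanSpace ℝ (Fin d)) τ|) := by
        have h1 : BddAbove ((fun θ => |Qn n θ τ ω - Q θ τ|) '' Θ) :=
          (hΘcomp.image_of_continuousOn (((hQncont n τ ω).sub (hQcont τ)).abs)).bddAbove
        rwa [Set.image_eq_range] at h1
      exact le_of_lt (lt_of_le_of_lt (le_ciSup hbdd ⟨θ, hθ⟩) hlt)
    -- measure bound
    have hbound : ∀ n, P {ω | ¬(τhat n ω = τ0 ∧ dist (θtilde n (τhat n ω) ω) (θstar τ0) < ε)}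
        ≤ ∑ τ : 𝒢, P {ω | η ≤ ⨆ θ : Θ, |Qn n (θ : EuclideanSpace ℝ (Fin d)) τ ω
            - Q (θ : EuclideanSpace ℝ (Fin d)) τ|} := by
      intro n
      have hae : ∀ᵐ ω ∂P,
          (∀ τ, θtilde n τ ω ∈ Θ ∧ ∀ θ ∈ Θ, Qn n (θtilde n τ ω) τ ω ≤ Qn n θ τ ω)
          ∧ ∀ τ : 𝒢, Qn n (θtilde n (τhat n ω) ω) (τhat n ω) ω ≤ Qn n (θtilde n τ ω) τ ω :=
        (ae_all_iff.2 (fun τ => hθtilde_min n τ)).and (hτhat_min n)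
      set G := {ω | (∀ τ, θtilde n τ ω ∈ Θ ∧ ∀ θ ∈ Θ, Qn n (θtilde n τ ω) τ ω ≤ Qn n θ τ ω)
          ∧ ∀ τ : 𝒢, Qn n (θtilde n (τhat n ω) ω) (τhat n ω) ω ≤ Qn n (θtilde n τ ω) τ ω}
        with hG
      have hGc : P Gᶜ = 0 := by
        rw [hG, Set.compl_setOf]
        exact hae
      have hsubset : {ω | ¬(τhat n ω = τ0 ∧ dist (θtilde n (τhat n ω) ω) (θstar τ0) < ε)}
          ⊆ (⋃ τ : 𝒢, {ω | η ≤ ⨆ θ : Θ, |Qn n (θ : EuclideanSpace ℝ (Fin d)) τ ω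
              - Q (θ : EuclideanSpace ℝ (Fin d)) τ|}) ∪ Gᶜ := by
        intro ω hω
        by_cases hωG : ω ∈ G
        · left
          by_contra hc
          simp only [Set.mem_iUnion, Set.mem_setOf_eq, not_exists, not_le] at hc
          exact hω (key n ω (fun τ => hsup_bound n ω τ (hc τ)) hωG.1 hωG.2)
        · exact Or.inr hωG
      calc P {ω | ¬(τhat n ω = τ0 ∧ dist (θtilde n (τhat n ω) ω) (θstar τ0) < ε)}
          ≤ P ((⋃ τ : 𝒢, {ω | η ≤ ⨆ θ : Θ, |Qn n (θ : EuclideanSpace ℝ (Fin d)) τ ω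
              - Q (θ : EuclideanSpace ℝ (Fin d)) τ|}) ∪ Gᶜ) := measure_mono hsubset
        _ ≤ P (⋃ τ : 𝒢, {ω | η ≤ ⨆ θ : Θ, |Qn n (θ : EuclideanSpace ℝ (Fin d)) τ ω
              - Q (θ : EuclideanSpace ℝ (Fin d)) τ|}) + P Gᶜ := measure_union_le _ _
        _ = P (⋃ τ : 𝒢, {ω | η ≤ ⨆ θ : Θ, |Qn n (θ : EuclideanSpace ℝ (Fin d)) τ ω
              - Q (θ : EuclideanSpace ℝ (Fin d)) τ|}) := by rw [hGc, add_zero]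
        _ ≤ ∑ τ : 𝒢, P {ω | η ≤ ⨆ θ : Θ, |Qn n (θ : EuclideanSpace ℝ (Fin d)) τ ω
              - Q (θ : EuclideanSpace ℝ (Fin d)) τ|} := measure_iUnion_fintype_le _ _
    -- the sum tends to 0
    have hsum : Tendsto (fun n => ∑ τ : 𝒢,
        P {ω | η ≤ ⨆ θ : Θ, |Qn n (θ : EuclideanSpace ℝ (Fin d)) τ ω
          - Q (θ : EuclideanSpace ℝ (Fin d)) τ|}) atTop (𝓝 0) := by
      have hz : (0:ENNReal) = ∑ τ : 𝒢, (0:ENNReal) := by simp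
      rw [hz]
      refine tendsto_finset_sum _ (fun τ _ => ?_)
      have h := tendstoInMeasure_iff_dist.mp (hQnconv τ) η hηpos
      have heq : ∀ n, {ω | η ≤ ⨆ θ : Θ, |Qn n (θ : EuclideanSpace ℝ (Fin d)) τ ω
          - Q (θ : EuclideanSpace ℝ (Fin d)) τ|}
          = {ω | η ≤ dist (⨆ θ : Θ, |Qn n (θ : EuclideanSpace ℝ (Fin d)) τ ω
          - Q (θ : EuclideanSpace ℝ (Fin d)) τ|) 0} := by
        intro n
        ext ω
        have hnn : (0:ℝ) ≤ ⨆ θ : Θ, |Qn n (θ : EuclideanSpace ℝ (Fin d)) τ ω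
            - Q (θ : EuclideanSpace ℝ (Fin d)) τ| :=
          Real.iSup_nonneg (fun θ => abs_nonneg _)
        simp [Real.dist_eq, abs_of_nonneg hnn]
      simpa only [heq] using h
    exact tendsto_of_tendsto_of_tendsto_of_le_of_le tendsto_const_nhds hsum
      (fun n => zero_le) hbound
  constructor
  · refine tendsto_of_tendsto_of_tendsto_of_le_of_le tendsto_const_nhds (main 1 one_pos)
      (fun n => zero_le) (fun n => measure_mono ?_)
    intro ω hω hc
    exact hω hc.1
  · refine tendstoInMeasure_iff_dist.mpr fun ε hε => ?_
    refine tendsto_of_tendsto_of_tendsto_of_le_of_le tendsto_const_nhds (main ε hε)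
      (fun n => zero_le) (fun n => measure_mono ?_)
    intro ω hω hc
    exact absurd hc.2 (not_lt.mpr hω)
end
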